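/- Let V be a differentiable, monotone increasing, concave value function with V(0)=0, and suppose the impatience distribution F_{1-γ} has density f_{1-γ}. If for all p ≤ p*, the inverse hazard rate satisfies (1 - F_{1-γ}(p/V(p)))/f_{1-γ}(p/V(p)) ≥ (p/V(p))·(1 - p·V'(p)/V(p)), then the derivative of revenue R(p) = p·(1 - F_{1-γ}(p/V(p))) is nonnegative on [0, p*], and hence the revenue-optimal price is at least p*. -/

import Mathlib

open Set Filter Topology

/-- If for all `p ≤ p*` the inverse hazard rate of the impatience distribution at
`p / V(p)` dominates `(p/V(p))·(1 - p·V'(p)/V(p))`, then the derivative of the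
revenue `R(p) = p·(1 - F_{1-γ}(p / V(p)))` is nonnegative on `[0, p*]`, and hence
the revenue-optimal price is at least `p*` (every price below `p*` earns no more
revenue than `p*` itself). -/
theorem revenue_derivative_nonneg
    (F₁ f₁ V V' : ℝ → ℝ) (pstar : ℝ) (hpstar : 0 < pstar)
    (hV0 : V 0 = 0)
    (hVpos : ∀ p : ℝ, 0 < p → 0 < V p)
    (hVmono : MonotoneOn V (Set.Ici 0))
    (hVconc : ConcaveOn ℝ (Set.Ici 0) V)
    (hV' : ∀ p : ℝ, HasDerivAt V (V' p) p)
    (hF₁' : ∀ x : ℝ, HasDerivAt F₁ (f₁ x) x)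
    (hf₁pos : ∀ x : ℝ, 0 < f₁ x)
    (hcond : ∀ p ∈ Set.Icc 0 pstar,
      (1 - F₁ (p / V p)) / f₁ (p / V p)
        ≥ (p / V p) * (1 - p * V' p / V p)) :
    (∀ p ∈ Set.Icc 0 pstar,
        0 ≤ deriv (fun q => q * (1 - F₁ (q / V q))) p) ∧
      ∀ p ∈ Set.Icc 0 pstar,
        p * (1 - F₁ (p / V p)) ≤ pstar * (1 - F₁ (pstar / V pstar)) := by
  set R : ℝ → ℝ := fun q => q * (1 - F₁ (q / V q)) with hRdef
  have hR0 : R 0 = 0 := by simp [hRdef]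
  -- F₁ is monotone
  have hFmono : Monotone F₁ :=
    (strictMono_of_deriv_pos fun x => by rw [(hF₁' x).deriv]; exact hf₁pos x).monotone
  -- concavity: p * V' p ≤ V p for p > 0
  have hVd : ∀ p : ℝ, 0 < p → p * V' p ≤ V p := by
    intro p hp
    have hslope : Filter.Tendsto (slope V p) (𝓝[>] p) (𝓝 (V' p)) :=
      (hasDerivAt_iff_tendsto_slope.mp (hV' p)).mono_left
        (nhdsWithin_mono _ fun x hx => hx.ne')
    have hle : V' p ≤ V p / p := by
      refine le_of_tendsto hslope ?_
      filter_upwards [self_mem_nhdsWithin] with z hz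
      have h := hVconc.slope_anti_adjacent (x := 0) (y := p) (z := z)
        Set.self_mem_Ici (le_of_lt (hp.trans hz)) hp hz
      rw [slope_def_field]
      rw [hV0] at h
      simpa using h
    have h2 := mul_le_mul_of_nonneg_left hle hp.le
    rwa [mul_div_cancel₀ _ hp.ne'] at h2
  -- 1 - F₁ (p / V p) ≥ 0 on (0, pstar]
  have h1F : ∀ p : ℝ, 0 < p → p ≤ pstar → 0 ≤ 1 - F₁ (p / V p) := by
    intro p hp hple
    have hVp := hVpos p hp
    have hc := hcond p ⟨hp.le, hple⟩
    have hrhs : 0 ≤ (p / V p) * (1 - p * V' p / V p) := by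
      apply mul_nonneg (div_nonneg hp.le hVp.le)
      have hle1 : p * V' p / V p ≤ 1 := by
        rw [div_le_one hVp]; exact hVd p hp
      linarith
    have h0 : 0 ≤ (1 - F₁ (p / V p)) / f₁ (p / V p) := le_trans hrhs hc
    calc (0:ℝ) ≤ ((1 - F₁ (p / V p)) / f₁ (p / V p)) * f₁ (p / V p) :=
          mul_nonneg h0 (hf₁pos _).le
      _ = 1 - F₁ (p / V p) := div_mul_cancel₀ _ (hf₁pos _).ne'
  -- derivative of R at positive points
  have hRderiv : ∀ p : ℝ, 0 < p →
      HasDerivAt R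
        (1 * (1 - F₁ (p / V p)) +
          p * (0 - f₁ (p / V p) * ((1 * V p - p * V' p) / V p ^ 2))) p := by
    intro p hp
    have hVne : V p ≠ 0 := (hVpos p hp).ne'
    have h1 : HasDerivAt (fun q : ℝ => q / V q) ((1 * V p - p * V' p) / V p ^ 2) p :=
      (hasDerivAt_id p).div (hV' p) hVne
    have h2 := (hF₁' (p / V p)).comp p h1
    have h3 : HasDerivAt (fun q : ℝ => 1 - F₁ (q / V q))
        (0 - f₁ (p / V p) * ((1 * V p - p * V' p) / V p ^ 2)) p :=
      (hasDerivAt_const p (1:ℝ)).sub h2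
    exact (hasDerivAt_id p).mul h3
  -- the derivative is nonnegative on (0, pstar]
  have hDpos : ∀ p : ℝ, 0 < p → p ≤ pstar →
      0 ≤ 1 * (1 - F₁ (p / V p)) +
          p * (0 - f₁ (p / V p) * ((1 * V p - p * V' p) / V p ^ 2)) := by
    intro p hp hple
    have hVp := hVpos p hp
    have hc := hcond p ⟨hp.le, hple⟩
    have hfpos := hf₁pos (p / V p)
    have hkey : (p / V p) * (1 - p * V' p / V p) * f₁ (p / V p) ≤ 1 - F₁ (p / V p) := by
      rw [← le_div_iff₀ hfpos]; exact hc
    have halg : p * (f₁ (p / V p) * ((1 * V p - p * V' p) / V p ^ 2))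
        = (p / V p) * (1 - p * V' p / V p) * f₁ (p / V p) := by
      field_simp
    rw [one_mul]
    nlinarith [hkey, halg]
  -- bound on q / V q via concavity
  have hBnd : ∀ q : ℝ, 0 < q → q ≤ pstar → q / V q ≤ pstar / V pstar := by
    intro q hq hqle
    have hVq := hVpos q hq
    have hVps := hVpos pstar hpstar
    set t : ℝ := q / pstar with ht
    have ht0 : 0 ≤ t := div_nonneg hq.le hpstar.le
    have ht1 : t ≤ 1 := (div_le_one hpstar).mpr hqle
    have hcc := hVconc.2 (Set.self_mem_Ici) (Set.mem_Ici.mpr hpstar.le)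
      (by linarith : (0:ℝ) ≤ 1 - t) ht0 (by ring)
    have hqeq : (1 - t) • (0:ℝ) + t • pstar = q := by
      rw [ht, smul_eq_mul, smul_eq_mul, mul_zero, zero_add, div_mul_cancel₀ _ hpstar.ne']
    rw [hqeq, hV0] at hcc
    simp only [smul_eq_mul, mul_zero, zero_add] at hcc
    rw [div_le_div_iff₀ hVq hVps]
    have : t * V pstar * pstar ≤ V q * pstar :=
      mul_le_mul_of_nonneg_right hcc hpstar.le
    calc q * V pstar = t * V pstar * pstar := by rw [ht]; field_simp
      _ ≤ V q * pstar := this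
      _ = pstar * V q := by ring
  -- continuity of R on [0, pstar]
  have hRcont : ContinuousOn R (Set.Icc 0 pstar) := by
    intro p hp
    rcases eq_or_lt_of_le hp.1 with h0 | h0
    · -- continuity at 0 via squeeze
      subst h0
      have : Filter.Tendsto R (𝓝[Set.Icc 0 pstar] 0) (𝓝 0) := by
        apply squeeze_zero_norm' (a := fun q => (|1 - F₁ (pstar / V pstar)| + |1 - F₁ 0|) * q)
        · filter_upwards [self_mem_nhdsWithin] with q hq
          rcases eq_or_lt_of_le hq.1 with hq0 | hq0
          · rw [← hq0, hR0]; simp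
          · have hVq := hVpos q hq0
            have hg0 : 0 ≤ q / V q := div_nonneg hq0.le hVq.le
            have hgB : q / V q ≤ pstar / V pstar := hBnd q hq0 hq.2
            have hlo : 1 - F₁ (pstar / V pstar) ≤ 1 - F₁ (q / V q) := by
              have := hFmono hgB; linarith
            have hhi : 1 - F₁ (q / V q) ≤ 1 - F₁ 0 := by
              have := hFmono hg0; linarith
            have habs : |1 - F₁ (q / V q)| ≤ |1 - F₁ (pstar / V pstar)| + |1 - F₁ 0| :=
              le_trans (abs_le_max_abs_abs hlo hhi)
                (max_le (le_add_of_nonneg_right (abs_nonneg _))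
                  (le_add_of_nonneg_left (abs_nonneg _)))
            have : ‖R q‖ = |q| * |1 - F₁ (q / V q)| := abs_mul _ _
            rw [this, abs_of_pos hq0, mul_comm]
            exact mul_le_mul_of_nonneg_right habs hq0.le
        · have : Filter.Tendsto (fun q : ℝ => (|1 - F₁ (pstar / V pstar)| + |1 - F₁ 0|) * q)
              (𝓝 0) (𝓝 ((|1 - F₁ (pstar / V pstar)| + |1 - F₁ 0|) * 0)) :=
            (continuous_const.mul continuous_id).tendsto 0
          rw [mul_zero] at this
          exact this.mono_left nhdsWithin_le_nhds
      rw [ContinuousWithinAt, hR0]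
      exact this
    · exact ((hRderiv p h0).continuousAt).continuousWithinAt
  -- first conclusion
  have hfirst : ∀ p ∈ Set.Icc 0 pstar, 0 ≤ deriv R p := by
    intro p hp
    rcases eq_or_lt_of_le hp.1 with h0 | h0
    · subst h0
      by_cases hdiff : DifferentiableAt ℝ R 0
      · have ht : Filter.Tendsto (slope R 0) (𝓝[>] 0) (𝓝 (deriv R 0)) :=
          (hasDerivAt_iff_tendsto_slope.mp hdiff.hasDerivAt).mono_left
            (nhdsWithin_mono _ fun x hx => hx.ne')
        refine ge_of_tendsto ht ?_
        filter_upwards [Ioo_mem_nhdsGT_of_mem (Set.mem_Ico.mpr ⟨le_refl (0:ℝ), hpstar⟩)]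
          with q hq
        rw [slope_def_field, hR0, sub_zero, sub_zero, hRdef]
        exact div_nonneg (mul_nonneg hq.1.le (h1F q hq.1 hq.2.le)) hq.1.le
      · rw [deriv_zero_of_not_differentiableAt hdiff]
    · rw [(hRderiv p h0).deriv]
      exact hDpos p h0 hp.2
  refine ⟨hfirst, ?_⟩
  -- second conclusion: monotonicity
  have hmono : MonotoneOn R (Set.Icc 0 pstar) := by
    apply monotoneOn_of_deriv_nonneg (convex_Icc 0 pstar) hRcont
    · intro x hx
      rw [interior_Icc] at hx
      exact ((hRderiv x hx.1).differentiableAt).differentiableWithinAt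
    · intro x hx
      rw [interior_Icc] at hx
      exact hfirst x ⟨hx.1.le, hx.2.le⟩
  intro p hp
  exact hmono hp (Set.mem_Icc.mpr ⟨hpstar.le, le_refl pstar⟩) hp.2
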